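/- arXiv:2203.09013 — 6 statements merged into one kernel-verified Lean document; each statement's English description precedes it below -/
import Mathlib

section
/- Directional monotonicity of folding orbits: suppose half-spaces H_1,…,H_ℓ (each of the form {v : ⟨v, n_k⟩ ≥ 0} with unit vector n_k) and a unit vector e satisfy ⟨n_k, e⟩ ≤ −ρ for all k, where ρ > 0. If v_{j+1} = F_{H_{α_j}}(v_j) for indices α_j ∈ {1,…,ℓ}, then for all m > k one has ⟨v_m, e⟩ − ⟨v_k, e⟩ ≤ −ρ |v_m − v_k|. -/
noncomputable def fold {E : Type*} [NormedAddCommGroup E] [InnerProductSpace ℝ E]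
    (n p v : E) : E :=
  if 0 ≤ (inner ℝ (v - p) n : ℝ) then v else v - (2 * (inner ℝ (v - p) n : ℝ)) • n

theorem folding_directional_monotonicity {d ℓ : ℕ}
    (nvec : Fin ℓ → EuclideanSpace ℝ (Fin d)) (e : EuclideanSpace ℝ (Fin d))
    (ρ : ℝ) (hρ : 0 < ρ) (hn : ∀ k, ‖nvec k‖ = 1) (he : ‖e‖ = 1)
    (hne : ∀ k, (inner ℝ (nvec k) e : ℝ) ≤ -ρ)
    (α : ℕ → Fin ℓ) (v : ℕ → EuclideanSpace ℝ (Fin d))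
    (hv : ∀ j, v (j + 1) = fold (nvec (α j)) 0 (v j))
    (k m : ℕ) (hkm : k < m) :
    (inner ℝ (v m) e : ℝ) - (inner ℝ (v k) e : ℝ) ≤ -ρ * ‖v m - v k‖ := by
  have step : ∀ j : ℕ, (inner ℝ (v (j+1)) e : ℝ) - (inner ℝ (v j) e : ℝ)
      ≤ -ρ * ‖v (j+1) - v j‖ := by
    intro j
    have hvj := hv j
    unfold fold at hvj
    rw [sub_zero] at hvj
    by_cases h : 0 ≤ (inner ℝ (v j) (nvec (α j)) : ℝ)
    · rw [if_pos h] at hvj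
      rw [hvj]
      simp
    · rw [if_neg h] at hvj
      set c : ℝ := (inner ℝ (v j) (nvec (α j)) : ℝ) with hc
      have hdiff : v (j+1) - v j = (-(2 * c)) • nvec (α j) := by
        rw [hvj]; module
      have hcneg : c < 0 := lt_of_not_ge h
      have ht : 0 < -(2 * c) := by linarith
      have hnorm : ‖v (j+1) - v j‖ = -(2 * c) := by
        rw [hdiff, norm_smul, hn (α j), mul_one, Real.norm_eq_abs, abs_of_pos ht]
      have hinner : (inner ℝ (v (j+1)) e : ℝ) - (inner ℝ (v j) e : ℝ)
          = (-(2 * c)) * (inner ℝ (nvec (α j)) e : ℝ) := by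
        rw [← inner_sub_left, hdiff, real_inner_smul_left]
      rw [hinner, hnorm]
      have := hne (α j)
      nlinarith
  induction m with
  | zero => omega
  | succ m ih =>
    rcases Nat.lt_succ_iff_lt_or_eq.mp hkm with h | h
    · have h1 := ih h
      have h2 := step m
      have h3 : ‖v (m+1) - v k‖ ≤ ‖v (m+1) - v m‖ + ‖v m - v k‖ :=
        norm_sub_le_norm_sub_add_norm_sub _ _ _
      nlinarith
    · subst h
      exact step k
end

section
/- A single folding applied to a point whose orbit has drifted satisfies: with e a fixed unit vector, if for each k the half-space H_k = {v : ⟨v, n_k⟩ ≥ 0}, ⟨n_k, e⟩ ≤ −ρ < 0, and v_{j+1} = F_{H_{α_j}}(v_j), then for any point w with ⟨e, v_m⟩ ≤ ⟨e, w⟩ and ρ ≤ 1, one has |v_j − w| ≥ ρ |v_m − w| / 2 for all j ≥ m. -/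
theorem folding_orbit_distance_lower_bound {d ℓ : ℕ}
    (nvec : Fin ℓ → EuclideanSpace ℝ (Fin d)) (e w : EuclideanSpace ℝ (Fin d))
    (ρ : ℝ) (hρ : 0 < ρ) (hρ1 : ρ ≤ 1) (hn : ∀ k, ‖nvec k‖ = 1) (he : ‖e‖ = 1)
    (hne : ∀ k, (inner ℝ (nvec k) e : ℝ) ≤ -ρ)
    (α : ℕ → Fin ℓ) (v : ℕ → EuclideanSpace ℝ (Fin d))
    (hv : ∀ j, v (j + 1) = fold (nvec (α j)) 0 (v j))
    (m : ℕ) (hm : (inner ℝ e (v m) : ℝ) ≤ (inner ℝ e w : ℝ)) :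
    ∀ j, m ≤ j → ρ * ‖v m - w‖ / 2 ≤ ‖v j - w‖ := by
  -- step estimate
  have hstep : ∀ j, (inner ℝ e (v (j+1) - v j) : ℝ) ≤ -ρ * ‖v (j+1) - v j‖ := by
    intro j
    rw [hv j]
    unfold fold
    split_ifs with h
    · simp
    · set c : ℝ := (inner ℝ (v j - 0) (nvec (α j)) : ℝ) with hc
      have hclt : c < 0 := not_le.1 h
      have hdiff : v j - (2 * c) • nvec (α j) - v j = (-(2*c)) • nvec (α j) := by
        rw [neg_smul]; abel
      rw [hdiff]
      rw [inner_smul_right, norm_smul, hn (α j)]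
      have hen : (inner ℝ e (nvec (α j)) : ℝ) ≤ -ρ := by
        rw [real_inner_comm]; exact hne (α j)
      have h2c : (0:ℝ) < -(2*c) := by linarith
      calc -(2*c) * (inner ℝ e (nvec (α j)) : ℝ) ≤ -(2*c) * (-ρ) :=
            mul_le_mul_of_nonneg_left hen h2c.le
        _ = -ρ * (‖-(2*c)‖ * 1) := by
            rw [Real.norm_eq_abs, abs_of_pos h2c]; ring
  -- cumulative drift
  have hdrift : ∀ j, m ≤ j → (inner ℝ e (v j - v m) : ℝ) ≤ -ρ * ‖v j - v m‖ := by
    intro j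
    induction j with
    | zero =>
      intro hj
      have h0 : m = 0 := Nat.le_zero.mp hj
      subst h0; simp
    | succ k ih =>
      intro hj
      rcases Nat.lt_or_ge m (k+1) with hlt | hge
      · have hmk : m ≤ k := Nat.lt_succ_iff.mp hlt
        have hk := ih hmk
        have hdec : v (k+1) - v m = (v (k+1) - v k) + (v k - v m) := by abel
        rw [hdec, inner_add_right]
        have htri : ‖(v (k+1) - v k) + (v k - v m)‖ ≤ ‖v (k+1) - v k‖ + ‖v k - v m‖ :=
          norm_add_le _ _
        have := hstep k
        nlinarith [norm_nonneg (v (k+1) - v k), norm_nonneg (v k - v m)]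
      · have : m = k + 1 := le_antisymm hj hge
        subst this; simp
  intro j hj
  by_cases hcase : ‖v j - v m‖ ≤ ‖v m - w‖ / 2
  · have h1 : ‖v m - w‖ ≤ ‖v m - v j‖ + ‖v j - w‖ := by
      have : v m - w = (v m - v j) + (v j - w) := by abel
      rw [this]; exact norm_add_le _ _
    have h2 : ‖v m - v j‖ = ‖v j - v m‖ := by rw [← norm_neg]; congr 1; abel
    have h3 : ρ * ‖v m - w‖ / 2 ≤ ‖v m - w‖ / 2 := by
      have := norm_nonneg (v m - w); nlinarith
    linarith
  · push_neg at hcase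
    have hd := hdrift j hj
    have hsplit : (inner ℝ e (v j - w) : ℝ) = (inner ℝ e (v j - v m) : ℝ) + ((inner ℝ e (v m) : ℝ) - (inner ℝ e w : ℝ)) := by
      have : v j - w = (v j - v m) + (v m - w) := by abel
      rw [this, inner_add_right, inner_sub_right, inner_sub_right]
    have h1 : (inner ℝ e (v j - w) : ℝ) ≤ -ρ * (‖v m - w‖ / 2) := by
      rw [hsplit]; nlinarith
    have hcs : |(inner ℝ e (v j - w) : ℝ)| ≤ ‖e‖ * ‖v j - w‖ := abs_real_inner_le_norm _ _
    rw [he, one_mul] at hcs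
    have hna : -(inner ℝ e (v j - w) : ℝ) ≤ |(inner ℝ e (v j - w) : ℝ)| := neg_le_abs _
    linarith
end

section
/- Wedge angle lower bound: if B(w_0, r) ⊂ H_1 ∩ H_2 where H_1, H_2 are closed half-planes in ℝ² whose boundaries meet at a point z, and the wedge H_1 ∩ H_2 has angle α, then α ≥ arcsin((r/2)/|z − w_0|) ≥ (r/2)/|z − w_0|. -/
private lemma wedge_aux_mul (x y b : ℝ) (hx : 0 ≤ x) (hy : 0 ≤ y)
    (h1 : x ^ 2 ≤ b) (h2 : y ^ 2 ≤ b) : x * y ≤ b := by nlinarith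

private lemma wedge_aux_sqrt (c : ℝ) (hc0 : 0 < c) (hc1 : c ≤ 1) :
    -Real.sqrt (1 - (c / 2) ^ 2) ≤ 2 * c ^ 2 - 1 := by
  rcases le_or_gt (1 - 2 * c ^ 2) 0 with h | h
  · have := Real.sqrt_nonneg (1 - (c / 2) ^ 2); linarith
  · have hX : (0:ℝ) ≤ 1 - (c / 2) ^ 2 := by nlinarith
    have hsq := Real.sq_sqrt hX
    have hnn := Real.sqrt_nonneg (1 - (c / 2) ^ 2)
    nlinarith [hsq, hnn]

theorem wedge_angle_lower_bound
    (n1 n2 z w0 : EuclideanSpace ℝ (Fin 2)) (r α : ℝ)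
    (hn1 : ‖n1‖ = 1) (hn2 : ‖n2‖ = 1) (hr : 0 < r)
    (hind : LinearIndependent ℝ ![n1, n2])
    (hball : ∀ x, dist x w0 ≤ r →
      0 ≤ (inner ℝ (x - z) n1 : ℝ) ∧ 0 ≤ (inner ℝ (x - z) n2 : ℝ))
    (hα : α = Real.pi - Real.arccos (inner ℝ n1 n2 : ℝ)) :
    Real.arcsin (r / 2 / dist z w0) ≤ α ∧
    r / 2 / dist z w0 ≤ Real.arcsin (r / 2 / dist z w0) := by
  classical
  set v : EuclideanSpace ℝ (Fin 2) := w0 - z with hv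
  have hdist : dist z w0 = ‖v‖ := by
    rw [dist_eq_norm, hv, norm_sub_rev]
  have key : ∀ n : EuclideanSpace ℝ (Fin 2), ‖n‖ = 1 →
      (0 ≤ (inner ℝ (w0 - r • n - z) n : ℝ)) → r ≤ (inner ℝ v n : ℝ) := by
    intro n hn h
    have h2 : (inner ℝ (w0 - r • n - z) n : ℝ) = (inner ℝ v n : ℝ) - r := by
      have hid : w0 - r • n - z = v - r • n := by rw [hv]; abel
      rw [hid, inner_sub_left, real_inner_smul_left, real_inner_self_eq_norm_sq, hn]
      ring
    rw [h2] at h; linarith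
  have hdball : ∀ n : EuclideanSpace ℝ (Fin 2), ‖n‖ = 1 →
      dist (w0 - r • n) w0 ≤ r := by
    intro n hn
    rw [dist_eq_norm]
    have hid : w0 - r • n - w0 = -(r • n) := by abel
    rw [hid, norm_neg, norm_smul, hn, Real.norm_eq_abs, abs_of_pos hr, mul_one]
  have h1 : r ≤ (inner ℝ v n1 : ℝ) := key n1 hn1 (hball _ (hdball n1 hn1)).1
  have h2 : r ≤ (inner ℝ v n2 : ℝ) := key n2 hn2 (hball _ (hdball n2 hn2)).2
  have hcs1 : (inner ℝ v n1 : ℝ) ≤ ‖v‖ := by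
    have := real_inner_le_norm v n1; rwa [hn1, mul_one] at this
  have hcs2 : (inner ℝ v n2 : ℝ) ≤ ‖v‖ := by
    have := real_inner_le_norm v n2; rwa [hn2, mul_one] at this
  have hD : 0 < ‖v‖ := lt_of_lt_of_le hr (le_trans h1 hcs1)
  set D : ℝ := ‖v‖ with hDdef
  set c : ℝ := r / D with hc
  have hc0 : 0 < c := div_pos hr hD
  have hc1 : c ≤ 1 := (div_le_one hD).2 (le_trans h1 hcs1)
  set u : EuclideanSpace ℝ (Fin 2) := D⁻¹ • v with hu
  have huu : (inner ℝ u u : ℝ) = 1 := by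
    rw [hu, real_inner_smul_left, real_inner_smul_right, real_inner_self_eq_norm_sq,
      ← hDdef]
    field_simp
  have hn1n1 : (inner ℝ n1 n1 : ℝ) = 1 := by
    rw [real_inner_self_eq_norm_sq, hn1]; norm_num
  have hn2n2 : (inner ℝ n2 n2 : ℝ) = 1 := by
    rw [real_inner_self_eq_norm_sq, hn2]; norm_num
  set a1 : ℝ := D⁻¹ * (inner ℝ v n1 : ℝ) with ha1
  set a2 : ℝ := D⁻¹ * (inner ℝ v n2 : ℝ) with ha2
  have hun1 : (inner ℝ u n1 : ℝ) = a1 := by rw [hu, real_inner_smul_left]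
  have hun2 : (inner ℝ u n2 : ℝ) = a2 := by rw [hu, real_inner_smul_left]
  have hn1u : (inner ℝ n1 u : ℝ) = a1 := by rw [real_inner_comm]; exact hun1
  have hn2u : (inner ℝ n2 u : ℝ) = a2 := by rw [real_inner_comm]; exact hun2
  have ha1c : c ≤ a1 := by
    rw [ha1, hc, div_eq_inv_mul]
    exact mul_le_mul_of_nonneg_left h1 (by positivity)
  have ha2c : c ≤ a2 := by
    rw [ha2, hc, div_eq_inv_mul]
    exact mul_le_mul_of_nonneg_left h2 (by positivity)
  have ha11 : a1 ≤ 1 := by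
    rw [ha1]
    calc D⁻¹ * (inner ℝ v n1 : ℝ) ≤ D⁻¹ * D := mul_le_mul_of_nonneg_left hcs1 (by positivity)
    _ = 1 := inv_mul_cancel₀ (ne_of_gt hD)
  have ha21 : a2 ≤ 1 := by
    rw [ha2]
    calc D⁻¹ * (inner ℝ v n2 : ℝ) ≤ D⁻¹ * D := mul_le_mul_of_nonneg_left hcs2 (by positivity)
    _ = 1 := inv_mul_cancel₀ (ne_of_gt hD)
  set m1 : EuclideanSpace ℝ (Fin 2) := n1 - a1 • u with hm1
  set m2 : EuclideanSpace ℝ (Fin 2) := n2 - a2 • u with hm2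
  have hinnm : (inner ℝ m1 m2 : ℝ) = (inner ℝ n1 n2 : ℝ) - a1 * a2 := by
    simp only [hm1, hm2, inner_sub_left, inner_sub_right, real_inner_smul_left,
      real_inner_smul_right, hn1u, hn2u, hun1, hun2, huu]
    ring
  have hnm1 : ‖m1‖ ^ 2 = 1 - a1 ^ 2 := by
    rw [← real_inner_self_eq_norm_sq]
    simp only [hm1, inner_sub_left, inner_sub_right, real_inner_smul_left,
      real_inner_smul_right, hn1u, hun1, huu, hn1n1]
    ring
  have hnm2 : ‖m2‖ ^ 2 = 1 - a2 ^ 2 := by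
    rw [← real_inner_self_eq_norm_sq]
    simp only [hm2, inner_sub_left, inner_sub_right, real_inner_smul_left,
      real_inner_smul_right, hn2u, hun2, huu, hn2n2]
    ring
  have hc2a1 : c ^ 2 ≤ a1 ^ 2 := by
    have := mul_le_mul ha1c ha1c hc0.le (le_trans hc0.le ha1c)
    calc c ^ 2 = c * c := sq c
    _ ≤ a1 * a1 := this
    _ = a1 ^ 2 := (sq a1).symm
  have hc2a2 : c ^ 2 ≤ a2 ^ 2 := by
    have := mul_le_mul ha2c ha2c hc0.le (le_trans hc0.le ha2c)
    calc c ^ 2 = c * c := sq c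
    _ ≤ a2 * a2 := this
    _ = a2 ^ 2 := (sq a2).symm
  have hmm : ‖m1‖ * ‖m2‖ ≤ 1 - c ^ 2 := by
    apply wedge_aux_mul _ _ _ (norm_nonneg m1) (norm_nonneg m2)
    · rw [hnm1]; linarith
    · rw [hnm2]; linarith
  have hinmm : -(1 - c ^ 2) ≤ (inner ℝ m1 m2 : ℝ) := by
    have habs := abs_real_inner_le_norm m1 m2
    have h' := neg_le_of_abs_le habs
    linarith
  have hcc : c * c ≤ a1 * a2 := mul_le_mul ha1c ha2c hc0.le (le_trans hc0.le ha1c)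
  have ht : 2 * c ^ 2 - 1 ≤ (inner ℝ n1 n2 : ℝ) := by
    have hc2 : c ^ 2 = c * c := sq c
    linarith [hinnm, hinmm, hcc]
  set s : ℝ := r / 2 / D with hs
  have hsc : s = c / 2 := by rw [hs, hc]; ring
  have hs0 : 0 ≤ s := by rw [hsc]; linarith
  have hs1 : s ≤ 1 := by rw [hsc]; linarith
  have hsqrt : -Real.sqrt (1 - s ^ 2) ≤ 2 * c ^ 2 - 1 := by
    rw [hsc]; exact wedge_aux_sqrt c hc0 hc1
  have htfull : -Real.sqrt (1 - s ^ 2) ≤ (inner ℝ n1 n2 : ℝ) := le_trans hsqrt ht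
  have hgoal1 : Real.arcsin s ≤ α := by
    have hmono : Real.arcsin (-Real.sqrt (1 - s ^ 2)) ≤ Real.arcsin (inner ℝ n1 n2 : ℝ) :=
      Real.monotone_arcsin htfull
    have heq : Real.arcsin (-Real.sqrt (1 - s ^ 2)) = -(Real.arccos s) := by
      rw [Real.arcsin_neg, Real.arccos_eq_arcsin hs0]
    rw [heq, Real.arccos_eq_pi_div_two_sub_arcsin] at hmono
    rw [hα, Real.arccos_eq_pi_div_two_sub_arcsin]
    linarith
  constructor
  · rw [hdist]; exact hgoal1
  · have hs' : r / 2 / dist z w0 = s := by rw [hdist]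
    rw [hs']
    rcases eq_or_lt_of_le hs0 with h0 | h0
    · rw [← h0]; simp
    · have hpos : 0 < Real.arcsin s := Real.arcsin_pos.2 h0
      have hlt := Real.sin_lt hpos
      rw [Real.sin_arcsin (by linarith) hs1] at hlt
      linarith
end

section
/- The collision map of two touching pinned balls is a folding: for touching balls i, j (|x_i − x_j| = 2), the transformation T_{ij} on ℝ^{nd} (which replaces (v_i, v_j) by (w_i, w_j) with w_i = v_i + (v_j·u)u − (v_i·u)u and w_j = v_j + (v_i·u)u − (v_j·u)u, u = (x_i − x_j)/|x_i − x_j|, when (v_i − v_j)·(x_i − x_j) < 0, and is the identity otherwise) coincides with the folding F_{H_{ij}} relative to the half-space H_{ij} = {w ∈ ℝ^{nd} : ⟨w, z_{ij}⟩ ≥ 0}, where z_{ij} is the unit vector proportional to the vector whose i-th block is x_i − x_j, j-th block is x_j − x_i, and all other blocks are 0. -/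
open scoped Classical

/-- The vector in `ℝ^{nd}` whose `i`-th block is `x i - x j`, `j`-th block is
`x j - x i`, and all other blocks are zero. -/
noncomputable def ztilde {d n : ℕ} (x : Fin n → EuclideanSpace ℝ (Fin d)) (i j : Fin n) :
    PiLp 2 fun _ : Fin n => EuclideanSpace ℝ (Fin d) :=
  WithLp.toLp 2 fun k => if k = i then x i - x j else if k = j then x j - x i else 0

/-- The elastic collision map `T_{ij}` on pseudo-velocities of pinned balls. -/
noncomputable def collide {d n : ℕ} (x : Fin n → EuclideanSpace ℝ (Fin d)) (i j : Fin n)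
    (v : PiLp 2 fun _ : Fin n => EuclideanSpace ℝ (Fin d)) :
    PiLp 2 fun _ : Fin n => EuclideanSpace ℝ (Fin d) :=
  let u : EuclideanSpace ℝ (Fin d) := ‖x i - x j‖⁻¹ • (x i - x j)
  if ‖x i - x j‖ = 2 ∧ (inner ℝ (v i - v j) (x i - x j) : ℝ) < 0 then
    WithLp.toLp 2 fun k =>
      if k = i then v i + (inner ℝ (v j) u : ℝ) • u - (inner ℝ (v i) u : ℝ) • u
      else if k = j then v j + (inner ℝ (v i) u : ℝ) • u - (inner ℝ (v j) u : ℝ) • u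
      else v k
  else v

/-- The touching graph of a family of pinned unit balls. -/
def touchGraph {d n : ℕ} (x : Fin n → EuclideanSpace ℝ (Fin d)) : SimpleGraph (Fin n) where
  Adj i j := i ≠ j ∧ ‖x i - x j‖ = 2
  symm := ⟨fun i j h => ⟨h.1.symm, by rw [norm_sub_rev]; exact h.2⟩⟩
  loopless := ⟨fun i h => h.1 rfl⟩

/-- The kissing number in dimension `d`: the maximal number of unit balls with
pairwise disjoint interiors all touching a fixed unit ball. -/
noncomputable def kissingNumber (d : ℕ) : ℕ :=
  sSup { m : ℕ | ∃ y : Fin m → EuclideanSpace ℝ (Fin d),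
    (∀ i, ‖y i‖ = 2) ∧ ∀ i j, i ≠ j → 2 ≤ ‖y i - y j‖ }
theorem collision_is_folding {d n : ℕ} (x : Fin n → EuclideanSpace ℝ (Fin d))
    (hdisj : ∀ i j, i ≠ j → 2 ≤ ‖x i - x j‖)
    (i j : Fin n) (hij : ‖x i - x j‖ = 2)
    (v : PiLp 2 fun _ : Fin n => EuclideanSpace ℝ (Fin d)) :
    collide x i j v = fold (((2 : ℝ) ^ (-(3 : ℝ) / 2)) • ztilde x i j) 0 v := by
  have hne : i ≠ j := by
    rintro rfl
    simp at hij
  set c : ℝ := (2 : ℝ) ^ (-(3 : ℝ) / 2) with hc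
  have hcpos : 0 < c := by positivity
  have hcc : 2 * (c * c) = 1 / 4 := by
    have h1 : c * c = (2:ℝ) ^ ((-(3:ℝ)/2) + (-(3:ℝ)/2)) := by
      rw [hc, ← Real.rpow_add (by norm_num)]
    rw [h1, show (-(3:ℝ)/2 + -(3:ℝ)/2) = ((-3 : ℤ) : ℝ) by norm_num,
      Real.rpow_intCast]
    norm_num
  set a : ℝ := inner ℝ (v i - v j) (x i - x j) with ha
  have hinner : (inner ℝ v (ztilde x i j) : ℝ) = a := by
    rw [PiLp.inner_apply]
    have hfun : ∀ k, (inner ℝ (v k) (ztilde x i j k) : ℝ)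
        = (if i = k then (inner ℝ (v i) (x i - x j) : ℝ) else 0)
          + (if j = k then (inner ℝ (v j) (x j - x i) : ℝ) else 0) := by
      intro k
      by_cases h1 : k = i
      · subst h1; simp [ztilde, hne, Ne.symm hne]
      · by_cases h2 : k = j
        · subst h2
          have hik : ¬ i = k := fun h => h1 h.symm
          simp [ztilde, h1, hik]
        · have hik : ¬ i = k := fun h => h1 h.symm
          have hjk : ¬ j = k := fun h => h2 h.symm
          simp [ztilde, h1, h2, hik, hjk]
    simp only [hfun, Finset.sum_add_distrib, Finset.sum_ite_eq, Finset.mem_univ, if_true]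
    rw [ha, inner_sub_left, show x j - x i = -(x i - x j) by abel, inner_neg_right]
    ring
  have hinner2 : (inner ℝ (v - 0) (c • ztilde x i j) : ℝ) = c * a := by
    rw [sub_zero, real_inner_smul_right, hinner]
  by_cases hv : 0 ≤ a
  · have h1 : ¬(‖x i - x j‖ = 2 ∧ (inner ℝ (v i - v j) (x i - x j) : ℝ) < 0) := by
      rintro ⟨-, h⟩; exact absurd h (not_lt.2 hv)
    rw [collide, fold]
    simp only [h1, if_false, hinner2, if_pos (mul_nonneg hcpos.le hv)]
  · push_neg at hv
    have h1 : (‖x i - x j‖ = 2 ∧ (inner ℝ (v i - v j) (x i - x j) : ℝ) < 0) := ⟨hij, hv⟩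
    have h2 : ¬ (0 ≤ (inner ℝ (v - 0) (c • ztilde x i j) : ℝ)) := by
      rw [hinner2]; exact not_le.2 (mul_neg_of_pos_of_neg hcpos hv)
    rw [collide, fold, if_neg h2, if_pos h1]
    refine PiLp.ext fun k => ?_
    have hrhs : (v - (2 * (inner ℝ (v - 0) (c • ztilde x i j) : ℝ)) • (c • ztilde x i j)) k
        = v k - ((1/4) * a) • ztilde x i j k := by
      rw [hinner2]
      simp only [PiLp.sub_apply, PiLp.smul_apply, smul_smul]
      congr 1
      rw [show 2 * (c * a) * c = 2 * (c * c) * a by ring, hcc]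
    rw [hrhs]
    have hu : ‖x i - x j‖⁻¹ • (x i - x j) = (2:ℝ)⁻¹ • (x i - x j) := by rw [hij]
    by_cases hk1 : k = i
    · subst hk1
      simp only [ztilde, hu, real_inner_smul_right, smul_smul, ha, inner_sub_left,
        eq_self_iff_true, if_true]
      match_scalars <;> ring
    · by_cases hk2 : k = j
      · subst hk2
        simp only [ztilde, hk1, hu, real_inner_smul_right, smul_smul, ha,
          inner_sub_left, eq_self_iff_true, if_true, if_false]
        rw [show x k - x i = -(x i - x k) by abel, smul_neg]
        match_scalars <;> ring
      · simp [ztilde, hk1, hk2]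
end

section
/- Common interior ball for collision half-spaces: let x_1,…,x_n ∈ ℝ^d be centers of unit balls whose touching graph is connected (so |x_k − x_1| ≤ 2(n−1) for all k). Define w = (w_1,…,w_n) ∈ ℝ^{nd} with w_k = c(x_k − x_1), where c > 0 is chosen so |w| = 1. Then for every touching pair (i,j), ⟨w, z_{ij}⟩ ≥ 1/(√(2n)(n−1)), where z_{ij} = 2^{−3/2} z̃_{ij} and z̃_{ij} has blocks x_i − x_j at position i, x_j − x_i at position j, zeros elsewhere. Consequently B(w, r) ⊂ ⋂_{(i,j) touching} H_{ij} for r = 1/(√(2n)(n−1)), where H_{ij} = {v ∈ ℝ^{nd} : ⟨v, z_{ij}⟩ ≥ 0}. -/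
open scoped Classical

lemma walk_norm_bound {d n : ℕ} (x : Fin n → EuclideanSpace ℝ (Fin d)) :
    ∀ {a b : Fin n} (p : (touchGraph x).Walk a b), ‖x a - x b‖ ≤ 2 * p.length := by
  intro a b p
  induction p with
  | nil => simp
  | @cons u v b h p ih =>
    have h2 : ‖x u - x v‖ = 2 := (show (touchGraph x).Adj u v from h).2
    calc ‖x u - x b‖ ≤ ‖x u - x v‖ + ‖x v - x b‖ := norm_sub_le_norm_sub_add_norm_sub _ _ _
      _ ≤ 2 + 2 * p.length := by rw [h2]; linarith
      _ = 2 * (SimpleGraph.Walk.cons h p).length := by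
          rw [SimpleGraph.Walk.length_cons]; push_cast; ring

lemma inner_ztilde {d n : ℕ} (x : Fin n → EuclideanSpace ℝ (Fin d)) (i j : Fin n)
    (hne : i ≠ j) (v : PiLp 2 fun _ : Fin n => EuclideanSpace ℝ (Fin d)) :
    (inner ℝ v (ztilde x i j) : ℝ)
      = (inner ℝ (v i) (x i - x j) : ℝ) + (inner ℝ (v j) (x j - x i) : ℝ) := by
  rw [PiLp.inner_apply]
  have : ∀ k, (inner ℝ (v k) (ztilde x i j k) : ℝ)
      = (if k = i then (inner ℝ (v i) (x i - x j) : ℝ) else 0)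
        + (if k = j then (inner ℝ (v j) (x j - x i) : ℝ) else 0) := by
    intro k
    unfold ztilde
    split_ifs with h1 h2 h2 <;> subst_vars <;> simp_all
  simp only [this, Finset.sum_add_distrib, Finset.sum_ite_eq', Finset.mem_univ, if_true]

set_option maxHeartbeats 1000000 in
theorem common_interior_ball {d n : ℕ} (hn : 2 ≤ n)
    (x : Fin n → EuclideanSpace ℝ (Fin d))
    (hdisj : ∀ i j, i ≠ j → 2 ≤ ‖x i - x j‖)
    (hconn : (touchGraph x).Connected)
    (c : ℝ) (hc : 0 < c)
    (w : PiLp 2 fun _ : Fin n => EuclideanSpace ℝ (Fin d))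
    (hw : ∀ k, w k = c • (x k - x (⟨0, by omega⟩ : Fin n)))
    (hwnorm : ‖w‖ = 1) :
    (∀ i j, ‖x i - x j‖ = 2 →
      1 / (Real.sqrt (2 * n) * ((n : ℝ) - 1))
        ≤ (inner ℝ w (((2 : ℝ) ^ (-(3 : ℝ) / 2)) • ztilde x i j) : ℝ)) ∧
    ∀ u, dist u w ≤ 1 / (Real.sqrt (2 * n) * ((n : ℝ) - 1)) →
      ∀ i j, ‖x i - x j‖ = 2 →
        0 ≤ (inner ℝ u (((2 : ℝ) ^ (-(3 : ℝ) / 2)) • ztilde x i j) : ℝ) := by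
  set o : Fin n := ⟨0, by omega⟩ with ho
  have hm : (1 : ℝ) ≤ (n : ℝ) - 1 := by
    have : (2 : ℝ) ≤ (n : ℝ) := by exact_mod_cast hn
    linarith
  -- distance bound from connectivity
  have hdistb : ∀ k, ‖x k - x o‖ ≤ 2 * ((n : ℝ) - 1) := by
    intro k
    obtain ⟨q⟩ := hconn k o
    set p := q.toPath
    have hlt : p.1.length < n := by
      have := SimpleGraph.Walk.IsPath.length_lt p.2
      simpa using this
    have hlen : (p.1.length : ℝ) ≤ (n : ℝ) - 1 := by
      have : (p.1.length : ℝ) + 1 ≤ (n : ℝ) := by exact_mod_cast hlt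
      linarith
    calc ‖x k - x o‖ ≤ 2 * p.1.length := walk_norm_bound x p.1
      _ ≤ 2 * ((n : ℝ) - 1) := by linarith
  -- lower bound on c
  have hc2 : 1 ≤ 4 * (n : ℝ) * ((n : ℝ) - 1) ^ 2 * c ^ 2 := by
    have h1 : (1 : ℝ) = ∑ k, ‖w k‖ ^ 2 := by
      rw [← PiLp.norm_sq_eq_of_L2, hwnorm]; norm_num
    have h2 : ∀ k : Fin n, ‖w k‖ ^ 2 ≤ c ^ 2 * (2 * ((n : ℝ) - 1)) ^ 2 := by
      intro k
      rw [hw k, norm_smul, Real.norm_eq_abs, abs_of_pos hc, mul_pow]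
      have h0 : ‖x k - x o‖ ^ 2 ≤ (2 * ((n : ℝ) - 1)) ^ 2 :=
        pow_le_pow_left₀ (norm_nonneg _) (hdistb k) 2
      nlinarith [sq_nonneg c]
    have h3 : (∑ k : Fin n, ‖w k‖ ^ 2) ≤ n * (c ^ 2 * (2 * ((n : ℝ) - 1)) ^ 2) := by
      calc (∑ k : Fin n, ‖w k‖ ^ 2) ≤ ∑ _k : Fin n, c ^ 2 * (2 * ((n : ℝ) - 1)) ^ 2 :=
            Finset.sum_le_sum fun k _ => h2 k
        _ = n * (c ^ 2 * (2 * ((n : ℝ) - 1)) ^ 2) := by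
            rw [Finset.sum_const, Finset.card_univ, Fintype.card_fin]; simp [nsmul_eq_mul]
    nlinarith [h1, h3]
  -- key inner ℝ product
  have hinner : ∀ i j : Fin n, ‖x i - x j‖ = 2 → (inner ℝ w (ztilde x i j) : ℝ) = 4 * c := by
    intro i j hij
    have hne : i ≠ j := by
      rintro rfl; simp at hij
    rw [inner_ztilde x i j hne w, hw i, hw j, real_inner_smul_left, real_inner_smul_left]
    have hji : x j - x i = -(x i - x j) := by abel
    have hsum : (inner ℝ (x i - x o) (x i - x j) : ℝ) + (inner ℝ (x j - x o) (x j - x i) : ℝ)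
        = inner ℝ (x i - x j) (x i - x j) := by
      rw [hji, inner_neg_right, ← sub_eq_add_neg, ← inner_sub_left]
      congr 1
      abel
    have h4 : (inner ℝ (x i - x j) (x i - x j) : ℝ) = 4 := by
      rw [real_inner_self_eq_norm_sq, hij]; norm_num
    nlinarith [hsum, h4]
  -- norm of ztilde
  have hznorm : ∀ i j : Fin n, ‖x i - x j‖ = 2 → ‖ztilde x i j‖ ^ 2 = 8 := by
    intro i j hij
    have hne : i ≠ j := by rintro rfl; simp at hij
    rw [PiLp.norm_sq_eq_of_L2]
    have : ∀ k, ‖ztilde x i j k‖ ^ 2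
        = (if k = i then (4 : ℝ) else 0) + (if k = j then (4 : ℝ) else 0) := by
      intro k
      unfold ztilde
      split_ifs with h1 h2 h2 <;> subst_vars <;>
        simp_all [norm_sub_rev] <;> nlinarith [hij]
    simp only [this, Finset.sum_add_distrib, Finset.sum_ite_eq', Finset.mem_univ, if_true]
    norm_num
  -- the scalar factor
  have hfac : (2 : ℝ) ^ (-(3 : ℝ) / 2) * 4 = Real.sqrt 2 := by
    have h4 : (4 : ℝ) = (2 : ℝ) ^ (2 : ℝ) := by
      rw [show (2:ℝ) = ((2:ℕ):ℝ) from by norm_num, Real.rpow_natCast]; norm_num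
    rw [h4, ← Real.rpow_add (by norm_num : (0:ℝ) < 2)]
    rw [Real.sqrt_eq_rpow]
    norm_num
  have hrpos : (0 : ℝ) < (2 : ℝ) ^ (-(3 : ℝ) / 2) := Real.rpow_pos_of_pos (by norm_num) _
  -- part 1
  have part1 : ∀ i j, ‖x i - x j‖ = 2 →
      1 / (Real.sqrt (2 * n) * ((n : ℝ) - 1))
        ≤ (inner ℝ w (((2 : ℝ) ^ (-(3 : ℝ) / 2)) • ztilde x i j) : ℝ) := by
    intro i j hij
    rw [real_inner_smul_right, hinner i j hij]
    have heq : (2 : ℝ) ^ (-(3 : ℝ) / 2) * (4 * c) = Real.sqrt 2 * c := by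
      rw [← mul_assoc, hfac]
    rw [heq]
    rw [div_le_iff₀ (by positivity : (0:ℝ) < Real.sqrt (2 * n) * ((n : ℝ) - 1))]
    have hs2 : Real.sqrt 2 ^ 2 = 2 := Real.sq_sqrt (by norm_num)
    have hsn : Real.sqrt (2 * n) ^ 2 = 2 * n := Real.sq_sqrt (by positivity)
    have hA : (0 : ℝ) < Real.sqrt 2 * c * (Real.sqrt (2 * n) * ((n : ℝ) - 1)) := by
      have : (0:ℝ) < Real.sqrt 2 := by positivity
      have : (0:ℝ) < Real.sqrt (2 * n) := by positivity
      positivity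
    set A := Real.sqrt 2 * c * (Real.sqrt (2 * n) * ((n : ℝ) - 1)) with hAdef
    have hA2 : A ^ 2 = 4 * (n : ℝ) * ((n : ℝ) - 1) ^ 2 * c ^ 2 := by
      rw [hAdef, mul_pow, mul_pow, mul_pow, hs2, hsn]; ring
    have hA1 : (1 : ℝ) ≤ A ^ 2 := by rw [hA2]; exact hc2
    nlinarith [hA, hA1]
  refine ⟨part1, ?_⟩
  intro u hu i j hij
  set z := ((2 : ℝ) ^ (-(3 : ℝ) / 2)) • ztilde x i j with hz
  have hz1 : ‖z‖ = 1 := by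
    rw [hz, norm_smul, Real.norm_eq_abs, abs_of_pos hrpos]
    have hzt : ‖ztilde x i j‖ = Real.sqrt 8 := by
      rw [← Real.sqrt_sq (norm_nonneg (ztilde x i j)), hznorm i j hij]
    rw [hzt]
    have h8 : Real.sqrt 8 = (2 : ℝ) ^ ((3 : ℝ) / 2) := by
      rw [Real.sqrt_eq_rpow, show (8:ℝ) = (2:ℝ) ^ (3:ℝ) from by
        rw [show (3:ℝ) = ((3:ℕ):ℝ) from by norm_num, Real.rpow_natCast]; norm_num,
        ← Real.rpow_mul (by norm_num : (0:ℝ) ≤ 2)]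
      norm_num
    rw [h8, ← Real.rpow_add (by norm_num : (0:ℝ) < 2)]
    norm_num
  have hwz := part1 i j hij
  rw [← hz] at hwz
  have habs : |(inner ℝ (u - w) z : ℝ)| ≤ ‖u - w‖ * ‖z‖ := abs_real_inner_le_norm _ _
  have hdw : ‖u - w‖ = dist u w := (dist_eq_norm u w).symm
  have hsplit : (inner ℝ u z : ℝ) = (inner ℝ w z : ℝ) + (inner ℝ (u - w) z : ℝ) := by
    rw [inner_sub_left]; ring
  rw [hsplit]
  have h1 : -(‖u - w‖ * ‖z‖) ≤ (inner ℝ (u - w) z : ℝ) := neg_le_of_abs_le habs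
  rw [hz1, hdw] at h1
  linarith
end

section
/- Unbounded orbits for two half-planes: for every m ∈ ℕ there exist closed half-planes H_1, H_2 in ℝ² (with 0 ∈ ∂H_1 ∩ ∂H_2), a starting point v_1, and a sequence α_j ∈ {1,2} such that the orbit v_{j+1} = F_{H_{α_j}}(v_j) contains more than m distinct points. In particular, no bound on orbit size can depend only on the number of half-spaces. -/
noncomputable def pt (θ : ℝ) : EuclideanSpace ℝ (Fin 2) :=
  (WithLp.equiv 2 (Fin 2 → ℝ)).symm ![Real.cos θ, Real.sin θ]

lemma pt_apply0 (θ : ℝ) : pt θ 0 = Real.cos θ := by simp [pt]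
lemma pt_apply1 (θ : ℝ) : pt θ 1 = Real.sin θ := by simp [pt]

lemma norm_pt (θ : ℝ) : ‖pt θ‖ = 1 := by
  rw [EuclideanSpace.norm_eq]
  simp [pt, Fin.sum_univ_two, Real.sin_sq_add_cos_sq, Real.cos_sq_add_sin_sq]

lemma inner_pt (θ ψ : ℝ) : (inner ℝ (pt θ) (pt ψ) : ℝ) = Real.cos (θ - ψ) := by
  simp [pt, PiLp.inner_apply, RCLike.inner_apply, Fin.sum_univ_two, Real.cos_sub]
  ring

lemma pt_two_pi (θ : ℝ) : pt (θ + 2 * Real.pi) = pt θ := by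
  unfold pt
  norm_num [Real.cos_add_two_pi, Real.sin_add_two_pi]

lemma fold_pt_neg (ψ θ : ℝ) (hc : Real.cos (θ - ψ) < 0) :
    fold (pt ψ) 0 (pt θ) = pt (2 * ψ + Real.pi - θ) := by
  unfold fold
  rw [sub_zero, inner_pt, if_neg (not_le.mpr hc)]
  have h1 : 2 * ψ + Real.pi - θ = Real.pi - ((θ - ψ) - ψ) := by ring
  ext i
  fin_cases i
  · simp only [PiLp.sub_apply, PiLp.smul_apply, smul_eq_mul, h1, pt,
      WithLp.equiv_symm_apply, PiLp.toLp_apply, Matrix.cons_val_zero, Fin.mk_zero, Fin.mk_one, Real.cos_pi, Real.sin_pi,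
      Real.cos_pi_sub, Real.cos_sub, Real.sin_sub]
    linear_combination (-Real.cos θ) * Real.sin_sq_add_cos_sq ψ
  · simp only [PiLp.sub_apply, PiLp.smul_apply, smul_eq_mul, h1, pt,
      WithLp.equiv_symm_apply, PiLp.toLp_apply, Matrix.cons_val_one, Matrix.head_cons, Matrix.cons_val_zero, Fin.mk_zero, Fin.mk_one, Real.cos_pi, Real.sin_pi,
      Real.sin_pi_sub, Real.cos_sub, Real.sin_sub]
    linear_combination (-Real.sin θ) * Real.sin_sq_add_cos_sq ψ

set_option maxHeartbeats 1000000 in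
open Real in
theorem unbounded_orbits_two_halfplanes (m : ℕ) :
    ∃ (h : Fin 2 → EuclideanSpace ℝ (Fin 2)) (v1 : EuclideanSpace ℝ (Fin 2))
      (α : ℕ → Fin 2) (v : ℕ → EuclideanSpace ℝ (Fin 2)),
      (∀ k, ‖h k‖ = 1) ∧ v 0 = v1 ∧
      (∀ j, v (j + 1) = fold (h (α j)) 0 (v j)) ∧
      ∃ S : Finset (EuclideanSpace ℝ (Fin 2)), ↑S ⊆ Set.range v ∧ m < S.card := by
  classical
  have pi_pos := Real.pi_pos
  set ε : ℝ := π / (8 * (m + 1)) with hε_def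
  have hm1 : (0:ℝ) < (m:ℝ) + 1 := by positivity
  have hε : 0 < ε := by positivity
  have hεπ : (4*((m:ℝ)+1)) * ε = π/2 := by
    rw [hε_def]; field_simp; ring
  set h : Fin 2 → EuclideanSpace ℝ (Fin 2) := ![pt (π/2), pt (ε - π/2)] with hh
  set α : ℕ → Fin 2 := fun j => if j % 2 = 0 then 0 else 1 with hα
  set v : ℕ → EuclideanSpace ℝ (Fin 2) :=
    fun j => Nat.rec (pt (-(π/2))) (fun j vj => fold (h (α j)) 0 vj) j with hv
  -- key orbit computation
  have hkey : ∀ k : ℕ, k ≤ m + 1 → v (2*k) = pt (2*(k:ℝ)*ε - π/2) := by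
    intro k
    induction k with
    | zero =>
      intro _
      have harg : 2*((0:ℕ):ℝ)*ε - π/2 = -(π/2) := by norm_num
      rw [harg]
      rfl
    | succ k ih =>
      intro hk1
      have hkm : (k : ℝ) ≤ m := by exact_mod_cast Nat.lt_succ_iff.mp (by omega)
      have hub : 2*(k:ℝ)*ε + ε < π/2 := by
        calc 2*(k:ℝ)*ε + ε = (2*(k:ℝ)+1)*ε := by ring
          _ < (4*((m:ℝ)+1))*ε := by
              apply mul_lt_mul_of_pos_right _ hε
              nlinarith
          _ = π/2 := hεπ
      have ih' := ih (by omega)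
      -- first fold: across the x-axis (normal at angle π/2)
      have hα0 : α (2*k) = 0 := by simp [hα, Nat.mul_mod_right]
      have hstep1 : v (2*k+1) = pt (π/2 - 2*(k:ℝ)*ε) := by
        have e : v (2*k+1) = fold (h (α (2*k))) 0 (v (2*k)) := rfl
        rw [e, hα0, ih']
        have hhh : h 0 = pt (π/2) := by simp [hh]
        rw [hhh, fold_pt_neg]
        · have harg : 2*(π/2) + π - (2*(k:ℝ)*ε - π/2) = (π/2 - 2*(k:ℝ)*ε) + 2*π := by ring
          rw [harg, pt_two_pi]
        · have harg : 2*(k:ℝ)*ε - π/2 - π/2 = 2*(k:ℝ)*ε - π := by ring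
          rw [harg, Real.cos_sub_pi, neg_lt_zero]
          apply Real.cos_pos_of_mem_Ioo
          constructor <;> nlinarith
      -- second fold: across the line at angle ε (normal at angle ε - π/2)
      have hα1 : α (2*k+1) = 1 := by
        have h2 : (2*k+1) % 2 = 1 := by omega
        simp [hα, h2]
      have e : v (2*(k+1)) = fold (h (α (2*k+1))) 0 (v (2*k+1)) := rfl
      rw [e, hα1, hstep1]
      have hhh : h 1 = pt (ε - π/2) := by simp [hh]
      rw [hhh, fold_pt_neg]
      · have harg : 2*(ε - π/2) + π - (π/2 - 2*(k:ℝ)*ε) = 2*(((k:ℕ):ℝ)+1)*ε - π/2 := by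
          ring
        rw [harg]
        norm_num
      · have harg : π/2 - 2*(k:ℝ)*ε - (ε - π/2) = π - (2*(k:ℝ)*ε + ε) := by ring
        rw [harg, Real.cos_pi_sub, neg_lt_zero]
        apply Real.cos_pos_of_mem_Ioo
        constructor <;> nlinarith
  refine ⟨h, pt (-(π/2)), α, v, ?_, rfl, fun j => rfl,
    (Finset.range (m+2)).image (fun k : ℕ => pt (2*(k:ℝ)*ε - π/2)), ?_, ?_⟩
  · intro k
    fin_cases k
    · show ‖pt (π/2)‖ = 1; exact norm_pt _
    · show ‖pt (ε - π/2)‖ = 1; exact norm_pt _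
  · intro x hx
    simp only [Finset.coe_image, Finset.coe_range, Set.mem_image, Set.mem_Iio] at hx
    obtain ⟨k, hk, rfl⟩ := hx
    exact ⟨2*k, hkey k (by omega)⟩
  · have hcard : ((Finset.range (m+2)).image
        (fun k : ℕ => pt (2*(k:ℝ)*ε - π/2))).card = m + 2 := by
      rw [Finset.card_image_of_injOn, Finset.card_range]
      intro a ha b hb hab
      simp only [Finset.mem_coe, Finset.mem_range] at ha hb
      have hab' : pt (2*(a:ℝ)*ε - π/2) = pt (2*(b:ℝ)*ε - π/2) := hab
      have h1 : Real.sin (2*(a:ℝ)*ε - π/2) = Real.sin (2*(b:ℝ)*ε - π/2) := by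
        rw [← pt_apply1, ← pt_apply1, hab']
      rw [Real.sin_sub_pi_div_two, Real.sin_sub_pi_div_two, neg_inj] at h1
      have bound : ∀ c : ℕ, c < m + 2 → 2*(c:ℝ)*ε ∈ Set.Icc 0 π := by
        intro c hc
        have hcm : (c:ℝ) ≤ (m:ℝ) + 1 := by exact_mod_cast Nat.lt_succ_iff.mp hc
        constructor
        · positivity
        · nlinarith
      have h2 := Real.injOn_cos (bound a ha) (bound b hb) h1
      have h3 : (a:ℝ) = b := by
        have hne : ε ≠ 0 := ne_of_gt hε
        field_simp at h2
        tauto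
      exact_mod_cast h3
    rw [hcard]; omega
end
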